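/- Under the scaling assumption λ(N) = λN² + o(N²) and μ(N) = μN + o(N) with λ, μ > 0 fixed constants, there exists a constant C > 0 such that for every integer N ≥ 2 and every particle configuration A : ℤ/Nℤ → {0,1}, | L^N(A) − (μ(N)/N) Σ_{i∈ℤ/Nℤ} [ (A_i + A_{i+1})/2 − A_i A_{i+1} ] Δψ(i/N) − (λ(N)/N) Σ_{i∈ℤ/Nℤ} (A_i − A_{i+1}) Δψ(i/N) | ≤ C/N. -/

import Mathlib

lemma key_exp (x : ℝ) : |Real.exp x - 1 - x| ≤ x ^ 2 * Real.exp |x| := by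
  rcases le_or_gt |x| 1 with h | h
  · calc |Real.exp x - 1 - x| ≤ x ^ 2 := Real.abs_exp_sub_one_sub_id_le h
      _ ≤ x ^ 2 * Real.exp |x| := by
        nlinarith [Real.one_le_exp (abs_nonneg x), sq_nonneg x]
  · rcases le_or_gt 0 x with hx | hx
    · have hx1 : 1 ≤ x := le_of_lt (by rwa [abs_of_nonneg hx] at h)
      rw [abs_of_nonneg hx]
      have h1 : 0 ≤ Real.exp x - 1 - x := by nlinarith [Real.add_one_le_exp x]
      rw [abs_of_nonneg h1]
      nlinarith [mul_nonneg (by nlinarith : (0:ℝ) ≤ x ^ 2 - 1) (Real.exp_pos x).le]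
    · have hx1 : x < -1 := by rw [abs_of_neg hx] at h; linarith
      have he : Real.exp x ≤ 1 := Real.exp_le_one_iff.mpr hx.le
      have habs : |Real.exp x - 1 - x| ≤ -x := by
        rw [abs_le]; constructor <;> nlinarith [Real.exp_pos x]
      rw [abs_of_neg hx]
      calc |Real.exp x - 1 - x| ≤ -x := habs
        _ ≤ x ^ 2 * Real.exp (-x) := by
          nlinarith [Real.one_le_exp (by linarith : (0:ℝ) ≤ -x)]

lemma aux_bound {l r a b B : ℝ} (hl : 0 ≤ l) (ha : 0 ≤ a) (ha1 : a ≤ 1)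
    (hb : 0 ≤ b) (hb1 : b ≤ 1) (hr : |r| ≤ B) : |l * r * a * b| ≤ l * B := by
  rw [abs_mul, abs_mul, abs_mul, abs_of_nonneg hl, abs_of_nonneg ha, abs_of_nonneg hb]
  calc l * |r| * a * b ≤ l * |r| * 1 * 1 := by
        apply mul_le_mul (mul_le_mul le_rfl ha1 ha (by positivity)) hb1 hb (by positivity)
    _ = l * |r| := by ring
    _ ≤ l * B := mul_le_mul_of_nonneg_left hr hl



/-- Under the scaling `λ(N) = λN² + o(N²)`, `μ(N) = μN + o(N)`,
there is `C > 0` such that for all `N ≥ 2` and all configurations `A`,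
`|L^N(A) - (μ(N)/N) Σᵢ [(Aᵢ+Aᵢ₊₁)/2 - AᵢAᵢ₊₁] Δψ(i/N)
  - (λ(N)/N) Σᵢ (Aᵢ-Aᵢ₊₁) Δψ(i/N)| ≤ C/N`. -/
theorem stmt_4 (ψ : ℝ → ℝ) (hper : Function.Periodic ψ 1) (hsm : ContDiff ℝ 2 ψ)
    (lab lba : ℕ → ℝ) (hlab : ∀ N, 0 < lab N) (hlba : ∀ N, 0 < lba N)
    (lam mu : ℝ) (hlam : 0 < lam) (hmu : 0 < mu)
    (hscale1 : (fun N : ℕ => (lab N + lba N) / 2 - lam * (N : ℝ) ^ 2) =o[Filter.atTop]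
      fun N : ℕ => (N : ℝ) ^ 2)
    (hscale2 : (fun N : ℕ => (lab N - lba N) - mu * (N : ℝ)) =o[Filter.atTop]
      fun N : ℕ => (N : ℝ)) :
    ∃ C > 0, ∀ N : ℕ, 2 ≤ N → ∀ [NeZero N], ∀ A : ZMod N → ℝ, (∀ i, A i = 0 ∨ A i = 1) →
      |(∑ i : ZMod N,
          (lab N * (Real.exp ((ψ (((i.val : ℝ) + 1) / N) - ψ ((i.val : ℝ) / N)) / N) - 1)
              * A i * (1 - A (i + 1))
            + lba N * (Real.exp (-(ψ (((i.val : ℝ) + 1) / N) - ψ ((i.val : ℝ) / N)) / N) - 1)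
              * (1 - A i) * A (i + 1)))
        - ((lab N - lba N) / N) *
            ∑ i : ZMod N, ((A i + A (i + 1)) / 2 - A i * A (i + 1))
              * (ψ (((i.val : ℝ) + 1) / N) - ψ ((i.val : ℝ) / N))
        - ((lab N + lba N) / 2 / N) *
            ∑ i : ZMod N, (A i - A (i + 1))
              * (ψ (((i.val : ℝ) + 1) / N) - ψ ((i.val : ℝ) / N))| ≤ C / (N : ℝ) := by
  -- Lipschitz bound for ψ
  have hdiff : Differentiable ℝ ψ := hsm.differentiable two_ne_zero
  have hcd : Continuous (deriv ψ) := hsm.continuous_deriv one_le_two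
  have hperd : Function.Periodic (deriv ψ) 1 := by
    intro x
    rw [← deriv_comp_add_const ψ 1 x]
    congr 1
    funext y
    exact hper y
  obtain ⟨M₀, hM₀⟩ := (isCompact_Icc (a := (0:ℝ)) (b := 1)).exists_bound_of_continuousOn
    hcd.continuousOn
  have hbd : ∀ x : ℝ, ‖deriv ψ x‖ ≤ M₀ := by
    intro x
    have h1 : deriv ψ (Int.fract x) = deriv ψ x := by
      have h2 : Int.fract x = x - (⌊x⌋ : ℝ) * 1 := by rw [mul_one]; rfl
      rw [h2]
      exact hperd.sub_int_mul_eq ⌊x⌋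
    rw [← h1]
    exact hM₀ _ ⟨Int.fract_nonneg x, (Int.fract_lt_one x).le⟩
  have hlip : ∀ a b : ℝ, |ψ b - ψ a| ≤ M₀ * |b - a| := by
    intro a b
    have := Convex.norm_image_sub_le_of_norm_deriv_le (f := ψ) (s := Set.univ)
      (fun x _ => hdiff.differentiableAt) (fun x _ => hbd x) convex_univ
      (Set.mem_univ a) (Set.mem_univ b)
    simpa [Real.norm_eq_abs] using this
  set M := max M₀ 1 with hMdef
  have hM1 : (1:ℝ) ≤ M := le_max_right _ _
  have hM0 : (0:ℝ) < M := lt_of_lt_of_le one_pos hM1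
  have hlipM : ∀ a b : ℝ, |ψ b - ψ a| ≤ M * |b - a| := fun a b =>
    le_trans (hlip a b) (mul_le_mul_of_nonneg_right (le_max_left _ _) (abs_nonneg _))
  -- uniform bound on lab + lba
  obtain ⟨K, hK0, hK⟩ : ∃ K > 0, ∀ N : ℕ, 2 ≤ N → lab N + lba N ≤ K * (N : ℝ) ^ 2 := by
    obtain ⟨c, hc0, hc⟩ := hscale1.isBigO.exists_pos
    obtain ⟨N₀, hN₀⟩ := Filter.eventually_atTop.mp hc.bound
    obtain ⟨K₁, hK₁⟩ := Finset.exists_le ((Finset.range N₀).image fun n => lab n + lba n)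
    refine ⟨max (max (2 * (lam + c)) K₁) 1, lt_of_lt_of_le one_pos (le_max_right _ _), ?_⟩
    intro N hN2
    have hNsq : (1:ℝ) ≤ (N:ℝ) ^ 2 := by
      have : (1:ℝ) ≤ (N:ℝ) := by exact_mod_cast le_trans (by norm_num) hN2
      nlinarith
    rcases le_or_gt N₀ N with h | h
    · have h1 := hN₀ N h
      rw [Real.norm_eq_abs, Real.norm_eq_abs,
        abs_of_nonneg (by positivity : (0:ℝ) ≤ (N:ℝ)^2)] at h1
      have h2 : (lab N + lba N) / 2 - lam * (N:ℝ)^2 ≤ c * (N:ℝ)^2 := le_trans (le_abs_self _) h1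
      have h3 : max (max (2 * (lam + c)) K₁) 1 ≥ 2 * (lam + c) :=
        le_trans (le_max_left _ _) (le_max_left _ _)
      nlinarith
    · have hmem : lab N + lba N ∈ (Finset.range N₀).image fun n => lab n + lba n :=
        Finset.mem_image.mpr ⟨N, Finset.mem_range.mpr h, rfl⟩
      have h1 : lab N + lba N ≤ K₁ := hK₁ _ hmem
      have h3 : K₁ ≤ max (max (2 * (lam + c)) K₁) 1 :=
        le_trans (le_max_right _ _) (le_max_left _ _)
      have h4 : (0:ℝ) < max (max (2 * (lam + c)) K₁) 1 :=
        lt_of_lt_of_le one_pos (le_max_right _ _)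
      nlinarith
  refine ⟨K * M ^ 2 * Real.exp M,
    mul_pos (mul_pos hK0 (pow_pos hM0 2)) (Real.exp_pos M), ?_⟩
  intro N hN2 _inst A hA
  have hn1 : (1:ℝ) ≤ (N:ℝ) := by exact_mod_cast le_trans (by norm_num) hN2
  have hn0 : (0:ℝ) < (N:ℝ) := lt_of_lt_of_le one_pos hn1
  have hnne : ((N:ℝ)) ≠ 0 := ne_of_gt hn0
  have hnsq1 : (1:ℝ) ≤ (N:ℝ) ^ 2 := by nlinarith
  set n : ℝ := (N : ℝ) with hndef
  -- combine into a single sum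
  rw [Finset.mul_sum, Finset.mul_sum, ← Finset.sum_sub_distrib, ← Finset.sum_sub_distrib]
  have hB0 : (0:ℝ) ≤ (M / n ^ 2) ^ 2 * Real.exp M := by positivity
  have hbound : ∀ i ∈ (Finset.univ : Finset (ZMod N)),
      |(lab N * (Real.exp ((ψ (((i.val : ℝ) + 1) / n) - ψ ((i.val : ℝ) / n)) / n) - 1)
            * A i * (1 - A (i + 1))
          + lba N * (Real.exp (-(ψ (((i.val : ℝ) + 1) / n) - ψ ((i.val : ℝ) / n)) / n) - 1)
            * (1 - A i) * A (i + 1))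
        - ((lab N - lba N) / n) * (((A i + A (i + 1)) / 2 - A i * A (i + 1))
            * (ψ (((i.val : ℝ) + 1) / n) - ψ ((i.val : ℝ) / n)))
        - ((lab N + lba N) / 2 / n) * ((A i - A (i + 1))
            * (ψ (((i.val : ℝ) + 1) / n) - ψ ((i.val : ℝ) / n)))|
        ≤ (lab N + lba N) * ((M / n ^ 2) ^ 2 * Real.exp M) := by
    intro i _
    set D := ψ (((i.val : ℝ) + 1) / n) - ψ ((i.val : ℝ) / n) with hDdef
    have hD : |D| ≤ M / n := by
      have h1 := hlipM ((i.val : ℝ) / n) (((i.val : ℝ) + 1) / n)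
      have harg : ((i.val : ℝ) + 1) / n - (i.val : ℝ) / n = 1 / n := by field_simp; ring
      rw [harg, abs_of_pos (show (0:ℝ) < 1 / n by positivity)] at h1
      calc |D| ≤ M * (1 / n) := h1
        _ = M / n := by ring
    have hX : |D / n| ≤ M / n ^ 2 := by
      rw [abs_div, abs_of_pos hn0]
      calc |D| / n ≤ (M / n) / n := by gcongr
        _ = M / n ^ 2 := by ring
    have hXM : |D / n| ≤ M := le_trans hX (by
      calc M / n ^ 2 ≤ M / 1 := by gcongr
        _ = M := by ring)
    have hR1 : |Real.exp (D / n) - 1 - D / n| ≤ (M / n ^ 2) ^ 2 * Real.exp M := by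
      refine le_trans (key_exp _) ?_
      have h1 : (D / n) ^ 2 ≤ (M / n ^ 2) ^ 2 := by
        rw [← sq_abs (D / n)]
        exact pow_le_pow_left₀ (abs_nonneg _) hX 2
      have h2 : Real.exp |D / n| ≤ Real.exp M := Real.exp_le_exp.mpr hXM
      exact mul_le_mul h1 h2 (Real.exp_pos _).le (by positivity)
    have hR2 : |Real.exp (-D / n) - 1 - -D / n| ≤ (M / n ^ 2) ^ 2 * Real.exp M := by
      refine le_trans (key_exp _) ?_
      have h1 : (-D / n) ^ 2 ≤ (M / n ^ 2) ^ 2 := by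
        rw [← sq_abs (-D / n)]
        refine pow_le_pow_left₀ (abs_nonneg _) ?_ 2
        rw [neg_div, abs_neg]
        exact hX
      have h2 : Real.exp |-D / n| ≤ Real.exp M := by
        rw [neg_div, abs_neg]
        exact Real.exp_le_exp.mpr hXM
      exact mul_le_mul h1 h2 (Real.exp_pos _).le (by positivity)
    have hid : lab N * (Real.exp (D / n) - 1) * A i * (1 - A (i + 1))
          + lba N * (Real.exp (-D / n) - 1) * (1 - A i) * A (i + 1)
        - ((lab N - lba N) / n) * (((A i + A (i + 1)) / 2 - A i * A (i + 1)) * D)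
        - ((lab N + lba N) / 2 / n) * ((A i - A (i + 1)) * D)
        = lab N * (Real.exp (D / n) - 1 - D / n) * A i * (1 - A (i + 1))
          + lba N * (Real.exp (-D / n) - 1 - -D / n) * (1 - A i) * A (i + 1) := by
      field_simp
      ring
    rw [hid]
    have hAi : 0 ≤ A i ∧ A i ≤ 1 := by rcases hA i with h | h <;> rw [h] <;> norm_num
    have hAj : 0 ≤ A (i + 1) ∧ A (i + 1) ≤ 1 := by
      rcases hA (i + 1) with h | h <;> rw [h] <;> norm_num
    calc |lab N * (Real.exp (D / n) - 1 - D / n) * A i * (1 - A (i + 1))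
          + lba N * (Real.exp (-D / n) - 1 - -D / n) * (1 - A i) * A (i + 1)|
        ≤ |lab N * (Real.exp (D / n) - 1 - D / n) * A i * (1 - A (i + 1))|
          + |lba N * (Real.exp (-D / n) - 1 - -D / n) * (1 - A i) * A (i + 1)| := abs_add_le _ _
      _ ≤ lab N * ((M / n ^ 2) ^ 2 * Real.exp M)
          + lba N * ((M / n ^ 2) ^ 2 * Real.exp M) := by
          apply add_le_add
          · exact aux_bound (hlab N).le hAi.1 hAi.2 (by linarith [hAj.1]) (by linarith [hAj.2]) hR1
          · exact aux_bound (hlba N).le (by linarith [hAi.1]) (by linarith [hAi.2]) hAj.1 hAj.2 hR2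
      _ = (lab N + lba N) * ((M / n ^ 2) ^ 2 * Real.exp M) := by ring
  refine le_trans (Finset.abs_sum_le_sum_abs _ _) ?_
  refine le_trans (Finset.sum_le_sum hbound) ?_
  rw [Finset.sum_const, Finset.card_univ, ZMod.card, nsmul_eq_mul]
  have hlb := hK N hN2
  calc n * ((lab N + lba N) * ((M / n ^ 2) ^ 2 * Real.exp M))
      ≤ n * ((K * n ^ 2) * ((M / n ^ 2) ^ 2 * Real.exp M)) := by gcongr
    _ = K * M ^ 2 * Real.exp M / n := by field_simp
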